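/- Consider two composite games differing only in that, in the second, a group of weight δT (0 < δT < T^l) leaves coalition l to become individuals. Let x and y be the respective composite equilibria. Then the individuals' cost weakly increases: min_r c_r(x_r) ≤ min_r c_r(y_r). -/

import Mathlib

open Set Filter

/-- Derivative at the left endpoint is at most the slope, for convex functions. -/
lemma aux_deriv_le_slope (f : ℝ → ℝ) (hf : ConvexOn ℝ (Set.Icc 0 1) f)
    {a b f' : ℝ} (ha : a ∈ Set.Icc (0:ℝ) 1) (hb : b ∈ Set.Icc (0:ℝ) 1) (hab : a < b)
    (h : HasDerivAt f f' a) : f' ≤ (f b - f a) / (b - a) := by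
  have hd : HasDerivWithinAt f f' (Set.Ioi a) a := h.hasDerivWithinAt
  rw [hasDerivWithinAt_iff_tendsto_slope' (by simp : a ∉ Set.Ioi a)] at hd
  refine le_of_tendsto hd ?_
  filter_upwards [Ioc_mem_nhdsGT hab] with w hw
  rw [slope_def_field]
  have hwI : w ∈ Set.Icc (0:ℝ) 1 := ⟨le_trans ha.1 hw.1.le, le_trans hw.2 hb.2⟩
  exact hf.secant_mono ha hwI hb (ne_of_gt hw.1) (ne_of_gt hab) hw.2

/-- Slope is at most the derivative at the right endpoint, for convex functions. -/
lemma aux_slope_le_deriv (f : ℝ → ℝ) (hf : ConvexOn ℝ (Set.Icc 0 1) f)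
    {a b f' : ℝ} (ha : a ∈ Set.Icc (0:ℝ) 1) (hb : b ∈ Set.Icc (0:ℝ) 1) (hab : a < b)
    (h : HasDerivAt f f' b) : (f b - f a) / (b - a) ≤ f' := by
  have hd : HasDerivWithinAt f f' (Set.Iio b) b := h.hasDerivWithinAt
  rw [hasDerivWithinAt_iff_tendsto_slope' (by simp : b ∉ Set.Iio b)] at hd
  refine ge_of_tendsto hd ?_
  filter_upwards [Ico_mem_nhdsLT hab] with w hw
  rw [slope_def_field]
  have hwI : w ∈ Set.Icc (0:ℝ) 1 := ⟨le_trans ha.1 hw.1, le_trans hw.2.le hb.2⟩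
  have := hf.secant_mono hb ha hwI (ne_of_lt hab) (ne_of_lt hw.2) hw.1
  calc (f b - f a) / (b - a) = (f a - f b) / (a - b) := by rw [← neg_div_neg_eq]; ring_nf
    _ ≤ (f w - f b) / (w - b) := this

lemma aux_deriv_mono (f f' : ℝ → ℝ) (hf : ConvexOn ℝ (Set.Icc 0 1) f)
    (hd : ∀ z ∈ Set.Icc (0:ℝ) 1, HasDerivAt f (f' z) z)
    {a b : ℝ} (ha : a ∈ Set.Icc (0:ℝ) 1) (hb : b ∈ Set.Icc (0:ℝ) 1) (hab : a ≤ b) :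
    f' a ≤ f' b := by
  rcases eq_or_lt_of_le hab with rfl | h
  · exact le_rfl
  · exact le_trans (aux_deriv_le_slope f hf ha hb h (hd a ha))
      (aux_slope_le_deriv f hf ha hb h (hd b hb))

lemma aux_deriv_nonneg (f : ℝ → ℝ) (hm : StrictMonoOn f (Set.Icc 0 1))
    {z f' : ℝ} (hz : z ∈ Set.Icc (0:ℝ) 1) (h : HasDerivAt f f' z) : 0 ≤ f' := by
  rcases lt_or_eq_of_le hz.2 with h1 | h1
  · have hd : HasDerivWithinAt f f' (Set.Ioi z) z := h.hasDerivWithinAt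
    rw [hasDerivWithinAt_iff_tendsto_slope' (by simp : z ∉ Set.Ioi z)] at hd
    refine ge_of_tendsto hd ?_
    filter_upwards [Ioc_mem_nhdsGT h1] with w hw
    rw [slope_def_field]
    have hwI : w ∈ Set.Icc (0:ℝ) 1 := ⟨le_trans hz.1 hw.1.le, hw.2⟩
    have := hm hz hwI hw.1
    have h2 : 0 < w - z := by linarith [hw.1]
    apply div_nonneg <;> linarith
  · subst h1
    have hd : HasDerivWithinAt f f' (Set.Iio 1) 1 := h.hasDerivWithinAt
    rw [hasDerivWithinAt_iff_tendsto_slope' (by simp : (1:ℝ) ∉ Set.Iio 1)] at hd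
    refine ge_of_tendsto hd ?_
    filter_upwards [Ico_mem_nhdsLT (by norm_num : (0:ℝ) < 1)] with w hw
    rw [slope_def_field]
    have hwI : w ∈ Set.Icc (0:ℝ) 1 := ⟨hw.1, hw.2.le⟩
    have := hm hwI hz hw.2
    rw [div_nonneg_iff]; right; constructor <;> linarith [hw.2]
theorem individuals_cost_increases_when_coalition_shrinks
    {R : Type*} [Fintype R] [Nonempty R] {K : ℕ}
    (c c' : R → ℝ → ℝ)
    (hmono : ∀ r, StrictMonoOn (c r) (Set.Icc 0 1))
    (hconv : ∀ r, ConvexOn ℝ (Set.Icc 0 1) (c r))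
    (hderiv : ∀ r, ∀ z ∈ Set.Icc (0:ℝ) 1, HasDerivAt (c r) (c' r z) z)
    (hcnonneg : ∀ r, ∀ z ∈ Set.Icc (0:ℝ) 1, 0 ≤ c r z)
    -- game Γ₀ : equilibrium (x0, x), aggregate X
    (x0 : R → ℝ) (x : Fin K → R → ℝ)
    (hx0 : ∀ r, 0 ≤ x0 r) (hx : ∀ k r, 0 ≤ x k r)
    (X : R → ℝ) (hXdef : ∀ r, X r = x0 r + ∑ k, x k r)
    (htotX : ∑ r, X r = 1)
    (heq0X : ∀ r, 0 < x0 r → ∀ s, c r (X r) ≤ c s (X s))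
    (heqkX : ∀ k r, 0 < x k r → ∀ s,
      c r (X r) + x k r * c' r (X r) ≤ c s (X s) + x k s * c' s (X s))
    -- game Γ₁ : equilibrium (y0, y), aggregate Y
    (y0 : R → ℝ) (y : Fin K → R → ℝ)
    (hy0 : ∀ r, 0 ≤ y0 r) (hy : ∀ k r, 0 ≤ y k r)
    (Y : R → ℝ) (hYdef : ∀ r, Y r = y0 r + ∑ k, y k r)
    (heq0Y : ∀ r, 0 < y0 r → ∀ s, c r (Y r) ≤ c s (Y s))
    (heqkY : ∀ k r, 0 < y k r → ∀ s,
      c r (Y r) + y k r * c' r (Y r) ≤ c s (Y s) + y k s * c' s (Y s))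
    -- the weight relations: a group of weight δ leaves coalition l
    (l : Fin K) (δ : ℝ) (hδpos : 0 < δ) (hδlt : δ < ∑ r, x l r)
    (hw0 : ∑ r, y0 r = (∑ r, x0 r) + δ)
    (hwl : ∑ r, y l r = (∑ r, x l r) - δ)
    (hwk : ∀ k : Fin K, k ≠ l → ∑ r, y k r = ∑ r, x k r) :
    Finset.univ.inf' Finset.univ_nonempty (fun r => c r (X r)) ≤
      Finset.univ.inf' Finset.univ_nonempty (fun r => c r (Y r)) := by
  by_contra hcon
  push_neg at hcon
  -- per-coalition total weights
  have hwk' : ∀ k : Fin K, ∑ r, y k r = ∑ r, x k r - (if k = l then δ else 0) := by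
    intro k
    by_cases h : k = l
    · subst h; simpa using hwl
    · simp [h, hwk k h]
  -- total flow in Γ₁ is also 1
  have hsumX : ∑ r, X r = ∑ r, x0 r + ∑ k, ∑ r, x k r := by
    simp only [hXdef]
    rw [Finset.sum_add_distrib, Finset.sum_comm]
  have hsumY : ∑ r, Y r = ∑ r, y0 r + ∑ k, ∑ r, y k r := by
    simp only [hYdef]
    rw [Finset.sum_add_distrib, Finset.sum_comm]
  have hdelta : ∑ k : Fin K, (if k = l then δ else 0) = δ := by simp
  have htotY : ∑ r, Y r = 1 := by
    rw [hsumY, hw0]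
    have : ∑ k, ∑ r, y k r = ∑ k, ∑ r, x k r - δ := by
      rw [← hdelta, ← Finset.sum_sub_distrib]
      exact Finset.sum_congr rfl fun k _ => hwk' k
    rw [this, ← htotX, hsumX]; ring
  -- aggregates lie in [0,1]
  have hXnn : ∀ r, 0 ≤ X r := fun r => by
    rw [hXdef]; exact add_nonneg (hx0 r) (Finset.sum_nonneg fun k _ => hx k r)
  have hYnn : ∀ r, 0 ≤ Y r := fun r => by
    rw [hYdef]; exact add_nonneg (hy0 r) (Finset.sum_nonneg fun k _ => hy k r)
  have hXI : ∀ r, X r ∈ Set.Icc (0:ℝ) 1 := fun r =>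
    ⟨hXnn r, htotX ▸ Finset.single_le_sum (fun s _ => hXnn s) (Finset.mem_univ r)⟩
  have hYI : ∀ r, Y r ∈ Set.Icc (0:ℝ) 1 := fun r =>
    ⟨hYnn r, htotY ▸ Finset.single_le_sum (fun s _ => hYnn s) (Finset.mem_univ r)⟩
  -- derivative facts
  have hc'mono : ∀ r (a b : ℝ), a ∈ Set.Icc (0:ℝ) 1 → b ∈ Set.Icc (0:ℝ) 1 → a ≤ b →
      c' r a ≤ c' r b := fun r a b ha hb hab =>
    aux_deriv_mono (c r) (c' r) (hconv r) (hderiv r) ha hb hab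
  have hc'nn : ∀ r (z : ℝ), z ∈ Set.Icc (0:ℝ) 1 → 0 ≤ c' r z := fun r z hz =>
    aux_deriv_nonneg (c r) (hmono r) hz (hderiv r z hz)
  -- the minimizing arc in Γ₁
  obtain ⟨m, -, hm⟩ := Finset.exists_mem_eq_inf' (Finset.univ_nonempty (α := R))
    (fun r => c r (Y r))
  have hkey : ∀ r, c m (Y m) < c r (X r) := fun r =>
    lt_of_lt_of_le (hm ▸ hcon) (Finset.inf'_le _ (Finset.mem_univ r))
  have hlt_flow : ∀ r, c r (Y r) < c r (X r) → Y r < X r := by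
    intro r h
    by_contra hle
    push_neg at hle
    exact absurd ((hmono r).monotoneOn (hXI r) (hYI r) hle) (by linarith)
  -- the set of arcs where the aggregate flow decreased
  set S : Finset R := Finset.univ.filter (fun r => Y r < X r) with hS
  have hmS : m ∈ S := Finset.mem_filter.2 ⟨Finset.mem_univ m, hlt_flow m (hkey m)⟩
  have hy0S : ∀ r, r ∉ S → y0 r = 0 := by
    intro r hr
    by_contra h
    have hpos : 0 < y0 r := (hy0 r).lt_of_ne (Ne.symm h)
    exact hr (Finset.mem_filter.2 ⟨Finset.mem_univ r,
      hlt_flow r (lt_of_le_of_lt (heq0Y r hpos m) (hkey r))⟩)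
  -- each coalition keeps (almost) all its weight on S
  have hclaim : ∀ k : Fin K,
      ∑ r ∈ S, x k r - (if k = l then δ else 0) ≤ ∑ r ∈ S, y k r := by
    intro k
    by_contra h
    push_neg at h
    have hδk : 0 ≤ (if k = l then δ else 0) := by positivity
    have h1 : ∑ r ∈ S, y k r < ∑ r ∈ S, x k r := by linarith
    obtain ⟨r, hrS, hr⟩ := Finset.exists_lt_of_sum_lt h1
    have hsplitX := Finset.sum_filter_add_sum_filter_not Finset.univ
      (fun r => Y r < X r) (x k)
    have hsplitY := Finset.sum_filter_add_sum_filter_not Finset.univ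
      (fun r => Y r < X r) (y k)
    have h2 : ∑ r ∈ Finset.univ.filter (fun r => ¬ Y r < X r), x k r <
        ∑ r ∈ Finset.univ.filter (fun r => ¬ Y r < X r), y k r := by
      have := hwk' k
      rw [hS] at *
      linarith
    obtain ⟨s, hsS, hs⟩ := Finset.exists_lt_of_sum_lt h2
    have hrXY : Y r < X r := (Finset.mem_filter.1 hrS).2
    have hsXY : X s ≤ Y s := le_of_not_gt (Finset.mem_filter.1 hsS).2
    have hxr : 0 < x k r := lt_of_le_of_lt (hy k r) hr
    have hys : 0 < y k s := lt_of_le_of_lt (hx k s) hs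
    have A1 := heqkX k r hxr s
    have A2 := heqkY k s hys r
    have B1 : c r (Y r) < c r (X r) := (hmono r) (hYI r) (hXI r) hrXY
    have B2 : c s (X s) ≤ c s (Y s) := (hmono s).monotoneOn (hXI s) (hYI s) hsXY
    have C1 : y k r * c' r (Y r) ≤ x k r * c' r (X r) :=
      mul_le_mul hr.le (hc'mono r _ _ (hYI r) (hXI r) hrXY.le)
        (hc'nn r _ (hYI r)) hxr.le
    have C2 : x k s * c' s (X s) ≤ y k s * c' s (Y s) :=
      mul_le_mul hs.le (hc'mono s _ _ (hXI s) (hYI s) hsXY)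
        (hc'nn s _ (hXI s)) hys.le
    linarith
  -- aggregate flow on S strictly decreased …
  have hSlt : ∑ r ∈ S, Y r < ∑ r ∈ S, X r :=
    Finset.sum_lt_sum_of_nonempty ⟨m, hmS⟩
      (fun r hr => (Finset.mem_filter.1 hr).2)
  -- … but also weakly increased: contradiction
  have hy0sum : ∑ r ∈ S, y0 r = ∑ r, y0 r :=
    Finset.sum_subset (Finset.subset_univ S) (fun r _ hr => hy0S r hr)
  have hx0sum : ∑ r ∈ S, x0 r ≤ ∑ r, x0 r :=
    Finset.sum_le_sum_of_subset_of_nonneg (Finset.subset_univ S)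
      (fun r _ _ => hx0 r)
  have hYS : ∑ r ∈ S, Y r = ∑ r ∈ S, y0 r + ∑ k, ∑ r ∈ S, y k r := by
    simp only [hYdef]
    rw [Finset.sum_add_distrib, Finset.sum_comm]
  have hXS : ∑ r ∈ S, X r = ∑ r ∈ S, x0 r + ∑ k, ∑ r ∈ S, x k r := by
    simp only [hXdef]
    rw [Finset.sum_add_distrib, Finset.sum_comm]
  have hk_ge : ∑ k, ∑ r ∈ S, x k r - δ ≤ ∑ k, ∑ r ∈ S, y k r := by
    calc ∑ k, ∑ r ∈ S, x k r - δ
        = ∑ k, (∑ r ∈ S, x k r - (if k = l then δ else 0)) := by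
          rw [Finset.sum_sub_distrib, hdelta]
      _ ≤ ∑ k, ∑ r ∈ S, y k r := Finset.sum_le_sum fun k _ => hclaim k
  rw [hYS, hXS] at hSlt
  rw [hw0] at hy0sum
  linarith
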